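/- arXiv:2605.31306 — 4 statements merged into one kernel-verified Lean document; each statement's English description precedes it below -/
import Mathlib

section
/- Let ρ be a probability measure on a measurable space Θ, let h, s : Θ → ℝ be bounded measurable functions, and let g₁, g₂ : (0,∞) → (0,∞) satisfy g₁(t) → 0 and g₂(t) → 0 as t → 0⁺. Let Ψ : (0,∞) → (Θ → ℝ) be a family of bounded measurable functions satisfying the uniform inner expansion sup_θ |Ψ_δ(θ) − h(θ) − g₁(δ)·s(θ)| = o(g₁(δ)) as δ → 0⁺. Let M : (0,∞) × (Θ → ℝ) → ℝ and S : (Θ → ℝ) → ℝ be such that (i) S is continuous at h with respect to the supremum norm, and (ii) the outer expansion holds uniformly near h: for every η > 0 there exist ε₀ > 0 and r > 0 such that |M(ε, ψ) − ∫ ψ dρ − g₂(ε)·S(ψ)| ≤ η·g₂(ε) for all ε ∈ (0, ε₀) and all bounded measurable ψ with sup_θ |ψ(θ) − h(θ)| ≤ r. Then V(ε, δ) := M(ε, Ψ_δ) satisfies: for every η > 0 there exist ε₀, δ₀ > 0 such that |V(ε, δ) − ∫ h dρ − g₁(δ)·∫ s dρ − g₂(ε)·S(h)| ≤ η·(g₁(δ)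 + g₂(ε)) for all ε ∈ (0, ε₀) and δ ∈ (0, δ₀). -/
open MeasureTheory Filter Set Topology

/-- Abstract Bayesian expansion (Theorem 1 of the paper): if the inner worst-case
value `Ψ δ` expands uniformly as `h + g₁(δ)·s + o(g₁(δ))`, and the outer worst-case
functional `M ε` expands uniformly near `h` as `∫ψ dρ + g₂(ε)·S(ψ) + o(g₂(ε))`,
with `S` sup-norm continuous at `h`, then the nested worst-case value
`V(ε,δ) = M ε (Ψ δ)` expands as
`∫h dρ + g₁(δ)·∫s dρ + g₂(ε)·S(h) + o(g₁(δ)) + o(g₂(ε))`. -/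
theorem bayesian_expansion
    {Θ : Type*} [MeasurableSpace Θ]
    (ρ : Measure Θ) [IsProbabilityMeasure ρ]
    (h s : Θ → ℝ)
    (hh_meas : Measurable h) (hh_bdd : ∃ C : ℝ, ∀ θ, |h θ| ≤ C)
    (hs_meas : Measurable s) (hs_bdd : ∃ C : ℝ, ∀ θ, |s θ| ≤ C)
    (g₁ g₂ : ℝ → ℝ)
    (hg₁_pos : ∀ t, 0 < t → 0 < g₁ t) (hg₂_pos : ∀ t, 0 < t → 0 < g₂ t)
    (hg₁_lim : Tendsto g₁ (𝓝[>] (0 : ℝ)) (𝓝 0))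
    (hg₂_lim : Tendsto g₂ (𝓝[>] (0 : ℝ)) (𝓝 0))
    (Ψ : ℝ → Θ → ℝ)
    (hΨ_meas : ∀ δ, 0 < δ → Measurable (Ψ δ))
    (hΨ_bdd : ∀ δ, 0 < δ → ∃ C : ℝ, ∀ θ, |Ψ δ θ| ≤ C)
    -- uniform inner expansion: `sup_θ |Ψ_δ(θ) − h(θ) − g₁(δ)·s(θ)| = o(g₁(δ))` as `δ → 0⁺`
    (hInner : ∀ η > (0 : ℝ), ∃ δ₀ > (0 : ℝ), ∀ δ, 0 < δ → δ < δ₀ →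
      ∀ θ, |Ψ δ θ - h θ - g₁ δ * s θ| ≤ η * g₁ δ)
    (M : ℝ → (Θ → ℝ) → ℝ) (S : (Θ → ℝ) → ℝ)
    -- `S` is continuous at `h` in the supremum norm
    (hS_cont : ∀ η > (0 : ℝ), ∃ r > (0 : ℝ), ∀ ψ : Θ → ℝ,
      (∀ θ, |ψ θ - h θ| ≤ r) → |S ψ - S h| ≤ η)
    -- uniform outer expansion near `h`
    (hOuter : ∀ η > (0 : ℝ), ∃ ε₀ > (0 : ℝ), ∃ r > (0 : ℝ), ∀ ε, 0 < ε → ε < ε₀ →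
      ∀ ψ : Θ → ℝ, Measurable ψ → (∃ C : ℝ, ∀ θ, |ψ θ| ≤ C) →
      (∀ θ, |ψ θ - h θ| ≤ r) →
      |M ε ψ - (∫ θ, ψ θ ∂ρ) - g₂ ε * S ψ| ≤ η * g₂ ε) :
    ∀ η > (0 : ℝ), ∃ ε₀ > (0 : ℝ), ∃ δ₀ > (0 : ℝ), ∀ ε δ, 0 < ε → ε < ε₀ → 0 < δ → δ < δ₀ →
      |M ε (Ψ δ) - (∫ θ, h θ ∂ρ) - g₁ δ * (∫ θ, s θ ∂ρ) - g₂ ε * S h|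
        ≤ η * (g₁ δ + g₂ ε) := by
  intro η hη
  obtain ⟨Cs, hCs⟩ := hs_bdd
  obtain ⟨Ch, hCh⟩ := hh_bdd
  set Cs' : ℝ := max Cs 0 with hCs'def
  have hCs' : ∀ θ, |s θ| ≤ Cs' := fun θ => (hCs θ).trans (le_max_left _ _)
  have hCs'0 : 0 ≤ Cs' := le_max_right _ _
  have hη₁ : 0 < η / 2 := by positivity
  obtain ⟨r₁, hr₁, hS⟩ := hS_cont (η / 2) hη₁
  obtain ⟨ε₀, hε₀, r₂, hr₂, hM⟩ := hOuter (η / 2) hη₁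
  obtain ⟨δ₁, hδ₁, hI⟩ := hInner (η / 2) hη₁
  set K : ℝ := η / 2 + Cs' + 1 with hKdef
  have hK : 0 < K := by positivity
  have hrmin : 0 < min r₁ r₂ / K := by positivity
  rw [Metric.tendsto_nhdsWithin_nhds] at hg₁_lim
  obtain ⟨δ₂, hδ₂, hg₁small⟩ := hg₁_lim _ hrmin
  refine ⟨ε₀, hε₀, min δ₁ δ₂, lt_min hδ₁ hδ₂, ?_⟩
  intro ε δ hε hεlt hδ hδlt
  have hδlt₁ : δ < δ₁ := lt_of_lt_of_le hδlt (min_le_left _ _)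
  have hδlt₂ : δ < δ₂ := lt_of_lt_of_le hδlt (min_le_right _ _)
  have hg₁pos := hg₁_pos δ hδ
  have hg₂pos := hg₂_pos ε hε
  have hg₁lt : g₁ δ < min r₁ r₂ / K := by
    have := hg₁small (mem_Ioi.mpr hδ) (by simpa [abs_of_pos hδ, Real.dist_eq] using hδlt₂)
    simpa [Real.dist_eq, abs_of_pos hg₁pos] using this
  -- pointwise inner bound
  have hI' := hI δ hδ hδlt₁
  have hclose : ∀ θ, |Ψ δ θ - h θ| ≤ min r₁ r₂ := by
    intro θ
    have h1 : |Ψ δ θ - h θ| ≤ |Ψ δ θ - h θ - g₁ δ * s θ| + |g₁ δ * s θ| := by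
      have := abs_sub_abs_le_abs_sub (Ψ δ θ - h θ) (g₁ δ * s θ)
      calc |Ψ δ θ - h θ| = |(Ψ δ θ - h θ - g₁ δ * s θ) + g₁ δ * s θ| := by ring_nf
        _ ≤ _ := abs_add_le _ _
    have h2 : |g₁ δ * s θ| ≤ g₁ δ * Cs' := by
      rw [abs_mul, abs_of_pos hg₁pos]
      exact mul_le_mul_of_nonneg_left (hCs' θ) hg₁pos.le
    have h3 : |Ψ δ θ - h θ| ≤ K * g₁ δ := by
      calc |Ψ δ θ - h θ| ≤ η / 2 * g₁ δ + g₁ δ * Cs' := h1.trans (add_le_add (hI' θ) h2)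
        _ = (η / 2 + Cs') * g₁ δ := by ring
        _ ≤ K * g₁ δ := by
            apply mul_le_mul_of_nonneg_right _ hg₁pos.le
            simp [hKdef]
    calc |Ψ δ θ - h θ| ≤ K * g₁ δ := h3
      _ ≤ K * (min r₁ r₂ / K) := mul_le_mul_of_nonneg_left hg₁lt.le hK.le
      _ = min r₁ r₂ := by field_simp
  have hclose₁ : ∀ θ, |Ψ δ θ - h θ| ≤ r₁ := fun θ => (hclose θ).trans (min_le_left _ _)
  have hclose₂ : ∀ θ, |Ψ δ θ - h θ| ≤ r₂ := fun θ => (hclose θ).trans (min_le_right _ _)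
  -- outer bound applied to Ψ δ
  have hA : |M ε (Ψ δ) - (∫ θ, Ψ δ θ ∂ρ) - g₂ ε * S (Ψ δ)| ≤ η / 2 * g₂ ε :=
    hM ε hε hεlt (Ψ δ) (hΨ_meas δ hδ) (hΨ_bdd δ hδ) hclose₂
  -- S continuity bound
  have hC : |S (Ψ δ) - S h| ≤ η / 2 := hS (Ψ δ) hclose₁
  -- integrability
  have hhint : Integrable h ρ :=
    (integrable_const Ch).mono' hh_meas.aestronglyMeasurable (ae_of_all _ hCh)
  have hsint : Integrable s ρ :=
    (integrable_const Cs).mono' hs_meas.aestronglyMeasurable (ae_of_all _ hCs)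
  obtain ⟨CΨ, hCΨ⟩ := hΨ_bdd δ hδ
  have hΨint : Integrable (Ψ δ) ρ :=
    (integrable_const CΨ).mono' (hΨ_meas δ hδ).aestronglyMeasurable (ae_of_all _ hCΨ)
  -- integral bound
  have hB : |(∫ θ, Ψ δ θ ∂ρ) - (∫ θ, h θ ∂ρ) - g₁ δ * (∫ θ, s θ ∂ρ)| ≤ η / 2 * g₁ δ := by
    have heq : (∫ θ, Ψ δ θ ∂ρ) - (∫ θ, h θ ∂ρ) - g₁ δ * (∫ θ, s θ ∂ρ)
        = ∫ θ, (Ψ δ θ - h θ - g₁ δ * s θ) ∂ρ := by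
      rw [integral_sub (f := fun θ => Ψ δ θ - h θ) (hΨint.sub hhint) (hsint.const_mul _),
        integral_sub hΨint hhint, integral_const_mul]
    rw [heq]
    have := norm_integral_le_of_norm_le_const (μ := ρ)
      (f := fun θ => Ψ δ θ - h θ - g₁ δ * s θ) (C := η / 2 * g₁ δ) (ae_of_all _ hI')
    simpa [Real.norm_eq_abs, measure_univ] using this
  -- assemble
  have key : M ε (Ψ δ) - (∫ θ, h θ ∂ρ) - g₁ δ * (∫ θ, s θ ∂ρ) - g₂ ε * S h
      = (M ε (Ψ δ) - (∫ θ, Ψ δ θ ∂ρ) - g₂ ε * S (Ψ δ))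
        + ((∫ θ, Ψ δ θ ∂ρ) - (∫ θ, h θ ∂ρ) - g₁ δ * (∫ θ, s θ ∂ρ))
        + g₂ ε * (S (Ψ δ) - S h) := by ring
  rw [key]
  calc |_ + _ + g₂ ε * (S (Ψ δ) - S h)|
      ≤ |M ε (Ψ δ) - (∫ θ, Ψ δ θ ∂ρ) - g₂ ε * S (Ψ δ)|
        + |(∫ θ, Ψ δ θ ∂ρ) - (∫ θ, h θ ∂ρ) - g₁ δ * (∫ θ, s θ ∂ρ)|
        + |g₂ ε * (S (Ψ δ) - S h)| := abs_add_three _ _ _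
    _ ≤ η / 2 * g₂ ε + η / 2 * g₁ δ + g₂ ε * (η / 2) := by
        refine add_le_add (add_le_add hA hB) ?_
        rw [abs_mul, abs_of_pos hg₂pos]
        exact mul_le_mul_of_nonneg_left hC hg₂pos.le
    _ ≤ η * (g₁ δ + g₂ ε) := by nlinarith
end

section
/- Let P be a probability measure on a measurable space Ω, let f : Ω → ℝ be bounded and measurable, and let δ > 0. Over all measurable q : Ω → ℝ with ∫ q² dP < ∞ and ∫ q dP = 1, the functional J(q) := ∫ q·f dP − (1/δ)·∫ (1/2)(q − 1)² dP attains its maximum at q* := 1 + δ·(f − m_P(f)), this maximizer is unique up to P-a.e. equality, the maximal value is J(q*) = m_P(f) + (δ/2)·Var_P(f), and the expected cost under the worst-case density is ∫ q*·f dP = m_P(f) + δ·Var_P(f). -/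
open MeasureTheory

variable {Ω : Type*} [MeasurableSpace Ω]

/-- Mean of `f` under `P`. -/
noncomputable def meanP (P : Measure Ω) (f : Ω → ℝ) : ℝ := ∫ ω, f ω ∂P

/-- Variance of `f` under `P`. -/
noncomputable def varP (P : Measure Ω) (f : Ω → ℝ) : ℝ :=
  ∫ ω, (f ω - meanP P f) ^ 2 ∂P

private lemma integrable_of_bdd {P : Measure Ω} [IsProbabilityMeasure P]
    {g : Ω → ℝ} (hg : Measurable g) {C : ℝ} (h : ∀ ω, |g ω| ≤ C) :
    Integrable g P :=
  Integrable.mono' (integrable_const C) hg.aestronglyMeasurable (Filter.Eventually.of_forall h)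

/-- Penalty-form worst-case problem for the modified χ²-divergence: over measurable `q`
with `∫ q² dP < ∞` and `∫ q dP = 1`, the functional
`J(q) = ∫ q f dP − (1/δ)∫ ½(q−1)² dP` is maximized by `q* = 1 + δ(f − m_P(f))`, the
maximizer is unique up to `P`-a.e. equality, the maximal value is
`m_P(f) + (δ/2)·Var_P(f)`, and the expected cost under the worst-case density is
`m_P(f) + δ·Var_P(f)`. -/
theorem chi2_penalty_worst_case
    (P : Measure Ω) [IsProbabilityMeasure P]
    (f : Ω → ℝ) (hf : Measurable f) (hf_bdd : ∃ C : ℝ, ∀ ω, |f ω| ≤ C)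
    (δ : ℝ) (hδ : 0 < δ) :
    (∀ q : Ω → ℝ, Measurable q → Integrable (fun ω => (q ω) ^ 2) P →
      (∫ ω, q ω ∂P = 1) →
      (∫ ω, q ω * f ω ∂P) - (1 / δ) * ∫ ω, (1 / 2) * (q ω - 1) ^ 2 ∂P
        ≤ meanP P f + (δ / 2) * varP P f) ∧
    (∀ q : Ω → ℝ, Measurable q → Integrable (fun ω => (q ω) ^ 2) P →
      (∫ ω, q ω ∂P = 1) →
      (∫ ω, q ω * f ω ∂P) - (1 / δ) * ∫ ω, (1 / 2) * (q ω - 1) ^ 2 ∂P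
        = meanP P f + (δ / 2) * varP P f →
      q =ᵐ[P] fun ω => 1 + δ * (f ω - meanP P f)) ∧
    Integrable (fun ω => (1 + δ * (f ω - meanP P f)) ^ 2) P ∧
    (∫ ω, (1 + δ * (f ω - meanP P f)) ∂P = 1) ∧
    ((∫ ω, (1 + δ * (f ω - meanP P f)) * f ω ∂P)
        - (1 / δ) * ∫ ω, (1 / 2) * ((1 + δ * (f ω - meanP P f)) - 1) ^ 2 ∂P
      = meanP P f + (δ / 2) * varP P f) ∧
    (∫ ω, (1 + δ * (f ω - meanP P f)) * f ω ∂P = meanP P f + δ * varP P f) := by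
  obtain ⟨C₀, hC₀⟩ := hf_bdd
  set C : ℝ := max C₀ 0 with hCdef
  have hC : ∀ ω, |f ω| ≤ C := fun ω => (hC₀ ω).trans (le_max_left _ _)
  have hC0 : 0 ≤ C := le_max_right _ _
  set m : ℝ := meanP P f with hm
  set Q : Ω → ℝ := fun ω => 1 + δ * (f ω - m) with hQdef
  have hQmeas : Measurable Q := by
    exact measurable_const.add (measurable_const.mul (hf.sub measurable_const))
  -- basic integrability for f
  have hfi : Integrable f P := integrable_of_bdd hf hC
  have hfmC : ∀ ω, |f ω - m| ≤ C + |m| := fun ω => by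
    calc |f ω - m| ≤ |f ω| + |m| := abs_sub _ _
    _ ≤ C + |m| := by linarith [hC ω]
  have hfm : Integrable (fun ω => f ω - m) P := hfi.sub (integrable_const m)
  have hfm2 : Integrable (fun ω => (f ω - m) ^ 2) P := by
    refine integrable_of_bdd ((hf.sub measurable_const).pow_const 2) (C := (C + |m|) ^ 2) ?_
    intro ω
    rw [abs_pow, ← sq_abs]
    exact pow_le_pow_left₀ (abs_nonneg _) (by simpa using hfmC ω) 2
  have hQbd : ∀ ω, |Q ω| ≤ 1 + δ * (C + |m|) := by
    intro ω
    have h1 : |δ * (f ω - m)| ≤ δ * (C + |m|) := by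
      rw [abs_mul, abs_of_pos hδ]
      exact mul_le_mul_of_nonneg_left (hfmC ω) hδ.le
    calc |Q ω| ≤ |(1 : ℝ)| + |δ * (f ω - m)| := abs_add_le _ _
    _ ≤ 1 + δ * (C + |m|) := by rw [abs_one]; linarith
  have hQi : Integrable Q P := integrable_of_bdd hQmeas hQbd
  have hQ2 : Integrable (fun ω => (Q ω) ^ 2) P := by
    refine integrable_of_bdd (hQmeas.pow_const 2) (C := (1 + δ * (C + |m|)) ^ 2) ?_
    intro ω
    rw [abs_pow, ← sq_abs]
    refine pow_le_pow_left₀ (abs_nonneg _) (by simpa using hQbd ω) 2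
  have hQf : Integrable (fun ω => Q ω * f ω) P := by
    refine integrable_of_bdd (hQmeas.mul hf) (C := (1 + δ * (C + |m|)) * C) ?_
    intro ω
    rw [abs_mul]
    exact mul_le_mul (hQbd ω) (hC ω) (abs_nonneg _) (by positivity)
  have hQ1sq : Integrable (fun ω => (Q ω - 1) ^ 2) P := by
    refine integrable_of_bdd ((hQmeas.sub measurable_const).pow_const 2)
      (C := (δ * (C + |m|)) ^ 2) ?_
    intro ω
    simp only [hQdef]
    rw [add_sub_cancel_left, abs_of_nonneg (sq_nonneg _), mul_pow]
    have h2 : (f ω - m) ^ 2 ≤ (C + |m|) ^ 2 := by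
      rw [← sq_abs]
      exact pow_le_pow_left₀ (abs_nonneg _) (hfmC ω) 2
    nlinarith [sq_nonneg δ]
  -- integral facts
  have hPuniv : (P Set.univ).toReal = 1 := by simp
  have hint_const : ∀ c : ℝ, ∫ _ω, c ∂P = c := fun c => by simp
  have hint_fm : ∫ ω, (f ω - m) ∂P = 0 := by
    rw [integral_sub hfi (integrable_const m), hint_const]
    simp [hm, meanP]
  have hint_Q : ∫ ω, Q ω ∂P = 1 := by
    simp only [hQdef]
    rw [integral_add (integrable_const 1) (hfm.const_mul δ), hint_const,
      integral_const_mul, hint_fm]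
    ring
  have hint_fmf : ∫ ω, (f ω - m) * f ω ∂P = varP P f := by
    have hpt : ∀ ω, (f ω - m) * f ω = (f ω - m) ^ 2 + m * (f ω - m) := fun ω => by ring
    rw [integral_congr_ae (Filter.Eventually.of_forall fun ω => hpt ω),
      integral_add hfm2 (hfm.const_mul m), integral_const_mul, hint_fm]
    simp only [mul_zero, add_zero]
    rfl
  have hint_Qf : ∫ ω, Q ω * f ω ∂P = m + δ * varP P f := by
    have hpt : ∀ ω, Q ω * f ω = f ω + δ * ((f ω - m) * f ω) := fun ω => by
      simp only [hQdef]; ring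
    have hfmf : Integrable (fun ω => (f ω - m) * f ω) P := by
      refine integrable_of_bdd ((hf.sub measurable_const).mul hf) (C := (C + |m|) * C) ?_
      intro ω
      rw [abs_mul]
      exact mul_le_mul (hfmC ω) (hC ω) (abs_nonneg _) (by positivity)
    rw [integral_congr_ae (Filter.Eventually.of_forall hpt),
      integral_add hfi (hfmf.const_mul δ), integral_const_mul, hint_fmf]
    rfl
  have hint_Q1sq : ∫ ω, (1 / 2 : ℝ) * (Q ω - 1) ^ 2 ∂P = δ ^ 2 / 2 * varP P f := by
    have hpt : ∀ ω, (1 / 2 : ℝ) * (Q ω - 1) ^ 2 = δ ^ 2 / 2 * (f ω - m) ^ 2 := fun ω => by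
      simp only [hQdef]; ring
    rw [integral_congr_ae (Filter.Eventually.of_forall hpt), integral_const_mul]
    rfl
  -- the key identity for general q
  have key : ∀ q : Ω → ℝ, Measurable q → Integrable (fun ω => (q ω) ^ 2) P →
      (∫ ω, q ω ∂P = 1) →
      (∫ ω, q ω * f ω ∂P) - (1 / δ) * ∫ ω, (1 / 2) * (q ω - 1) ^ 2 ∂P
        = (meanP P f + (δ / 2) * varP P f)
          - (1 / (2 * δ)) * ∫ ω, (q ω - Q ω) ^ 2 ∂P := by
    intro q hq hq2 hq1
    have hqi : Integrable q P := by
      refine Integrable.mono' ((hq2.add (integrable_const 1))) hq.aestronglyMeasurable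
        (Filter.Eventually.of_forall fun ω => ?_)
      simp only [Pi.add_apply, Real.norm_eq_abs]
      nlinarith [sq_nonneg (|q ω| - 1), abs_nonneg (q ω), sq_abs (q ω)]
    have hqf : Integrable (fun ω => q ω * f ω) P := by
      refine Integrable.mono' (hqi.abs.const_mul C) (hq.mul hf).aestronglyMeasurable
        (Filter.Eventually.of_forall fun ω => ?_)
      rw [Real.norm_eq_abs, abs_mul]
      calc |q ω| * |f ω| ≤ |q ω| * C := mul_le_mul_of_nonneg_left (hC ω) (abs_nonneg _)
      _ = C * |q ω| := mul_comm _ _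
    have hq1sq : Integrable (fun ω => (q ω - 1) ^ 2) P := by
      have : (fun ω => (q ω - 1) ^ 2) = fun ω => (q ω) ^ 2 - 2 * q ω + 1 := by
        funext ω; ring
      rw [this]
      exact (hq2.sub (hqi.const_mul 2)).add (integrable_const 1)
    have hg2 : Integrable (fun ω => (q ω - Q ω) ^ 2) P := by
      have : (fun ω => (q ω - Q ω) ^ 2)
          = fun ω => (q ω) ^ 2 - 2 * (q ω * Q ω) + (Q ω) ^ 2 := by
        funext ω; ring
      rw [this]
      have hqQ : Integrable (fun ω => q ω * Q ω) P := by
        refine Integrable.mono' (hqi.abs.const_mul (1 + δ * (C + |m|)))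
          (hq.mul hQmeas).aestronglyMeasurable (Filter.Eventually.of_forall fun ω => ?_)
        rw [Real.norm_eq_abs, abs_mul]
        calc |q ω| * |Q ω| ≤ |q ω| * (1 + δ * (C + |m|)) :=
          mul_le_mul_of_nonneg_left (hQbd ω) (abs_nonneg _)
        _ = (1 + δ * (C + |m|)) * |q ω| := mul_comm _ _
      exact (hq2.sub (hqQ.const_mul 2)).add hQ2
    have hgi : Integrable (fun ω => q ω - Q ω) P := hqi.sub hQi
    have hpt : ∀ ω, q ω * f ω - (1 / δ) * ((1 / 2) * (q ω - 1) ^ 2)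
        = (Q ω * f ω - (1 / δ) * ((1 / 2) * (Q ω - 1) ^ 2))
          + m * (q ω - Q ω) - (1 / (2 * δ)) * (q ω - Q ω) ^ 2 := by
      intro ω
      simp only [hQdef]
      field_simp
      ring
    have hsplitL : ∫ ω, (q ω * f ω - (1 / δ) * ((1 / 2) * (q ω - 1) ^ 2)) ∂P
        = (∫ ω, q ω * f ω ∂P) - (1 / δ) * ∫ ω, (1 / 2) * (q ω - 1) ^ 2 ∂P := by
      have hD : Integrable (fun ω => (1 / δ) * ((1 / 2) * (q ω - 1) ^ 2)) P :=
        (hq1sq.const_mul (1/2)).const_mul (1/δ)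
      rw [integral_sub hqf hD, integral_const_mul, integral_const_mul]
    have hA : Integrable (fun ω => Q ω * f ω - (1 / δ) * ((1 / 2) * (Q ω - 1) ^ 2)) P :=
      hQf.sub ((hQ1sq.const_mul (1/2)).const_mul (1/δ))
    have hB : Integrable (fun ω => m * (q ω - Q ω)) P := hgi.const_mul m
    have hAB : Integrable (fun ω => Q ω * f ω - (1 / δ) * ((1 / 2) * (Q ω - 1) ^ 2)
        + m * (q ω - Q ω)) P := hA.add hB
    have hCc : Integrable (fun ω => (1 / (2 * δ)) * (q ω - Q ω) ^ 2) P := hg2.const_mul _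
    have hsplitR : ∫ ω, ((Q ω * f ω - (1 / δ) * ((1 / 2) * (Q ω - 1) ^ 2))
          + m * (q ω - Q ω) - (1 / (2 * δ)) * (q ω - Q ω) ^ 2) ∂P
        = ((∫ ω, Q ω * f ω ∂P) - (1 / δ) * ∫ ω, (1 / 2) * (Q ω - 1) ^ 2 ∂P)
          + m * ((∫ ω, q ω ∂P) - ∫ ω, Q ω ∂P)
          - (1 / (2 * δ)) * ∫ ω, (q ω - Q ω) ^ 2 ∂P := by
      rw [integral_sub hAB hCc, integral_add hA hB,
        integral_sub hQf ((hQ1sq.const_mul (1/2)).const_mul (1/δ)),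
        integral_const_mul, integral_const_mul, integral_const_mul,
        integral_sub hqi hQi, integral_const_mul]
    have := integral_congr_ae (μ := P) (Filter.Eventually.of_forall hpt)
    rw [hsplitL, hsplitR] at this
    rw [this, hq1, hint_Q, hint_Qf, hint_Q1sq, ← hm]
    have hsimp : 1 / δ * (δ ^ 2 / 2 * varP P f) = δ / 2 * varP P f := by
      field_simp
    rw [hsimp]
    ring
  have hG_nonneg : ∀ q : Ω → ℝ, 0 ≤ ∫ ω, (q ω - Q ω) ^ 2 ∂P := fun q =>
    integral_nonneg fun ω => sq_nonneg _
  refine ⟨?_, ?_, hQ2, hint_Q, ?_, ?_⟩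
  · intro q hq hq2 hq1
    rw [key q hq hq2 hq1]
    have h1 : 0 ≤ (1 / (2 * δ)) * ∫ ω, (q ω - Q ω) ^ 2 ∂P := by
      apply mul_nonneg (by positivity) (hG_nonneg q)
    linarith
  · intro q hq hq2 hq1 heq
    rw [key q hq hq2 hq1] at heq
    have hG0 : ∫ ω, (q ω - Q ω) ^ 2 ∂P = 0 := by
      have h2δ : (1 / (2 * δ)) ≠ 0 := by positivity
      have : (1 / (2 * δ)) * ∫ ω, (q ω - Q ω) ^ 2 ∂P = 0 := by linarith
      exact (mul_eq_zero.mp this).resolve_left h2δ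
    have hqi : Integrable q P := by
      refine Integrable.mono' ((hq2.add (integrable_const 1))) hq.aestronglyMeasurable
        (Filter.Eventually.of_forall fun ω => ?_)
      simp only [Pi.add_apply, Real.norm_eq_abs]
      nlinarith [sq_nonneg (|q ω| - 1), abs_nonneg (q ω), sq_abs (q ω)]
    have hg2 : Integrable (fun ω => (q ω - Q ω) ^ 2) P := by
      have : (fun ω => (q ω - Q ω) ^ 2)
          = fun ω => (q ω) ^ 2 - 2 * (q ω * Q ω) + (Q ω) ^ 2 := by
        funext ω; ring
      rw [this]
      have hqQ : Integrable (fun ω => q ω * Q ω) P := by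
        refine Integrable.mono' (hqi.abs.const_mul (1 + δ * (C + |m|)))
          (hq.mul hQmeas).aestronglyMeasurable (Filter.Eventually.of_forall fun ω => ?_)
        rw [Real.norm_eq_abs, abs_mul]
        calc |q ω| * |Q ω| ≤ |q ω| * (1 + δ * (C + |m|)) :=
          mul_le_mul_of_nonneg_left (hQbd ω) (abs_nonneg _)
        _ = (1 + δ * (C + |m|)) * |q ω| := mul_comm _ _
      exact (hq2.sub (hqQ.const_mul 2)).add hQ2
    have hae : (fun ω => (q ω - Q ω) ^ 2) =ᵐ[P] 0 :=
      (integral_eq_zero_iff_of_nonneg (fun ω => sq_nonneg _) hg2).mp hG0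
    filter_upwards [hae] with ω hω
    have : (q ω - Q ω) ^ 2 = 0 := hω
    have : q ω - Q ω = 0 := by
      exact pow_eq_zero_iff (n := 2) (by norm_num) |>.mp this
    simp only [hQdef] at this ⊢
    linarith
  · rw [hint_Qf, hint_Q1sq]
    have hsimp : 1 / δ * (δ ^ 2 / 2 * varP P f) = δ / 2 * varP P f := by
      field_simp
    rw [hsimp]
    ring
  · rw [hint_Qf, hm]
end

section
/- Let ρ be a probability measure on a measurable space Θ, let L be a Markov kernel from Θ to a measurable space 𝒴, let f : Θ × 𝒴 → ℝ be bounded and measurable, g(θ) := ∫ f(θ, y) L(θ)(dy), v(θ) := Var_{L(θ)}(f(θ, ·)), and N := ∫ g dρ. For ε, δ ≥ 0 let V(ε, δ) := ∫_Θ (1 + ε·(Ψ_δ(θ) − ∫Ψ_δ dρ))·(∫_𝒴 (1 + δ·(f(θ,y) − g(θ)))·f(θ, y) L(θ)(dy)) dρ(θ) with Ψ_δ(θ) := g(θ) + δ·v(θ) be the expected cost under the penalty-form worst-case measure. Then the worst-case posterior sensitivity satisfies lim_{ε → 0⁺} (V(ε, 0) − N)/ε = Var_ρ(g), and the worst-case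 likelihood sensitivity satisfies lim_{δ → 0⁺} (V(0, δ) − N)/δ = ∫_Θ v dρ. -/
open MeasureTheory ProbabilityTheory Filter Topology

variable {Ω : Type*} [MeasurableSpace Ω]

/-- Conditional expected cost `g(θ) = ∫ f(θ,y) L(θ)(dy)`. -/
noncomputable def condMean {Θ 𝒴 : Type*} [MeasurableSpace Θ] [MeasurableSpace 𝒴]
    (L : Kernel Θ 𝒴) (f : Θ × 𝒴 → ℝ) (θ : Θ) : ℝ :=
  ∫ y, f (θ, y) ∂(L θ)

/-- Conditional variance `v(θ) = Var_{L(θ)}(f(θ,·))`. -/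
noncomputable def condVar {Θ 𝒴 : Type*} [MeasurableSpace Θ] [MeasurableSpace 𝒴]
    (L : Kernel Θ 𝒴) (f : Θ × 𝒴 → ℝ) (θ : Θ) : ℝ :=
  ∫ y, (f (θ, y) - condMean L f θ) ^ 2 ∂(L θ)

/-- Expected cost under the penalty-form worst-case measure: outer density
`η_ε(θ) = 1 + ε(Ψ_δ(θ) − ∫Ψ_δ dρ)` with `Ψ_δ(θ) = g(θ) + δ·v(θ)`, and inner density
`q^θ_δ(y) = 1 + δ(f(θ,y) − g(θ))`. -/
noncomputable def penaltyWC {Θ 𝒴 : Type*} [MeasurableSpace Θ] [MeasurableSpace 𝒴]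
    (ρ : Measure Θ) (L : Kernel Θ 𝒴) (f : Θ × 𝒴 → ℝ) (ε δ : ℝ) : ℝ :=
  ∫ θ,
    (1 + ε * ((condMean L f θ + δ * condVar L f θ)
        - ∫ θ', (condMean L f θ' + δ * condVar L f θ') ∂ρ))
      * (∫ y, (1 + δ * (f (θ, y) - condMean L f θ)) * f (θ, y) ∂(L θ)) ∂ρ

/-- Bounded a.e.-strongly-measurable functions are integrable w.r.t. a probability measure. -/
lemma int_bdd_prob {α : Type*} [MeasurableSpace α] (μ : Measure α) [IsProbabilityMeasure μ]
    (h : α → ℝ) (hsm : AEStronglyMeasurable h μ) (D : ℝ) (hD : ∀ x, |h x| ≤ D) :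
    Integrable h μ :=
  ⟨hsm, HasFiniteIntegral.of_bounded (C := D)
    (Filter.Eventually.of_forall fun x => by rw [Real.norm_eq_abs]; exact hD x)⟩

/-- Key computation: for a probability measure `μ` and an integrable `h` with integrable
square, `∫ (1 + t(h - m)) h dμ = m + t ∫ (h - m)² dμ` where `m = ∫ h dμ`. -/
lemma key_expand {α : Type*} [MeasurableSpace α] (μ : Measure α) [IsProbabilityMeasure μ]
    (h : α → ℝ) (hh : Integrable h μ) (hh2 : Integrable (fun x => h x ^ 2) μ) (t : ℝ) :
    ∫ x, (1 + t * (h x - ∫ x', h x' ∂μ)) * h x ∂μ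
      = (∫ x', h x' ∂μ) + t * ∫ x, (h x - ∫ x', h x' ∂μ) ^ 2 ∂μ := by
  set m := ∫ x', h x' ∂μ with hm
  have h1 : Integrable (fun x => (h x - m) * h x) μ := by
    have := hh2.sub (hh.const_mul m)
    refine this.congr (Filter.Eventually.of_forall fun x => ?_)
    simp only [Pi.sub_apply]; ring
  have h2 : Integrable (fun x => (h x - m) ^ 2) μ := by
    have := (hh2.sub ((hh.const_mul (2 * m)))).add (integrable_const (m ^ 2))
    refine this.congr (Filter.Eventually.of_forall fun x => ?_)
    simp only [Pi.add_apply, Pi.sub_apply]; ring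
  have h3 : Integrable (fun x => h x - m) μ := hh.sub (integrable_const m)
  have step1 : ∫ x, (1 + t * (h x - m)) * h x ∂μ
      = m + t * ∫ x, (h x - m) * h x ∂μ := by
    have : (fun x => (1 + t * (h x - m)) * h x)
        = fun x => h x + t * ((h x - m) * h x) := by
      funext x; ring
    rw [this, integral_add hh (h1.const_mul t), integral_const_mul, hm]
  have step2 : ∫ x, (h x - m) * h x ∂μ = ∫ x, (h x - m) ^ 2 ∂μ := by
    have : (fun x => (h x - m) * h x)
        = fun x => (h x - m) ^ 2 + m * (h x - m) := by
      funext x; ring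
    rw [this, integral_add h2 (h3.const_mul m), integral_const_mul,
      integral_sub hh (integrable_const m), integral_const]
    simp [hm]
  rw [step1, step2]

/-- Worst-case posterior and likelihood sensitivities in the penalty formulation with
modified χ²-divergence: `lim_{ε→0⁺} (V(ε,0) − N)/ε = Var_ρ(g)` and
`lim_{δ→0⁺} (V(0,δ) − N)/δ = ∫ v dρ`, where `N = ∫ g dρ` is the nominal expected cost. -/
theorem penalty_sensitivities
    {Θ 𝒴 : Type*} [MeasurableSpace Θ] [MeasurableSpace 𝒴]
    (ρ : Measure Θ) [IsProbabilityMeasure ρ]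
    (L : Kernel Θ 𝒴) [IsMarkovKernel L]
    (f : Θ × 𝒴 → ℝ) (hf : Measurable f) (hf_bdd : ∃ C : ℝ, ∀ p, |f p| ≤ C) :
    Tendsto
      (fun ε : ℝ => (penaltyWC ρ L f ε 0 - ∫ θ, condMean L f θ ∂ρ) / ε)
      (𝓝[>] (0 : ℝ)) (𝓝 (varP ρ (condMean L f))) ∧
    Tendsto
      (fun δ : ℝ => (penaltyWC ρ L f 0 δ - ∫ θ, condMean L f θ ∂ρ) / δ)
      (𝓝[>] (0 : ℝ)) (𝓝 (∫ θ, condVar L f θ ∂ρ)) := by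
  obtain ⟨C, hC⟩ := hf_bdd
  have hC' : ∀ p, |f p| ≤ |C| := fun p => (hC p).trans (le_abs_self C)
  set g := condMean L f with hgdef
  set v := condVar L f with hvdef
  -- measurability
  have hg_sm : StronglyMeasurable g :=
    hf.stronglyMeasurable.integral_kernel_prod_right' (κ := L)
  have hg_meas : Measurable g := hg_sm.measurable
  have hsq_sm : StronglyMeasurable (fun p : Θ × 𝒴 => (f p - g p.1) ^ 2) :=
    ((hf.sub (hg_meas.comp measurable_fst)).pow_const 2).stronglyMeasurable
  have hv_sm : StronglyMeasurable v := by
    have := hsq_sm.integral_kernel_prod_right' (κ := L)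
    exact this
  -- bounds
  have hg_bdd : ∀ θ, |g θ| ≤ |C| := by
    intro θ
    rw [← Real.norm_eq_abs]
    calc ‖∫ y, f (θ, y) ∂(L θ)‖ ≤ |C| * ((L θ) Set.univ).toReal :=
          norm_integral_le_of_norm_le_const
            (Filter.Eventually.of_forall fun y => by
              rw [Real.norm_eq_abs]; exact hC' _)
      _ = |C| := by simp
  have hv_bdd : ∀ θ, |v θ| ≤ (2 * |C|) ^ 2 := by
    intro θ
    rw [← Real.norm_eq_abs]
    calc ‖∫ y, (f (θ, y) - g θ) ^ 2 ∂(L θ)‖ ≤ (2 * |C|) ^ 2 * ((L θ) Set.univ).toReal := by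
          refine norm_integral_le_of_norm_le_const
            (Filter.Eventually.of_forall fun y => ?_)
          rw [Real.norm_eq_abs, abs_pow]
          refine pow_le_pow_left₀ (abs_nonneg _) ?_ 2
          calc |f (θ, y) - g θ| ≤ |f (θ, y)| + |g θ| := abs_sub _ _
            _ ≤ |C| + |C| := add_le_add (hC' _) (hg_bdd θ)
            _ = 2 * |C| := by ring
      _ = (2 * |C|) ^ 2 := by simp
  -- integrability helpers over probability measures
  have hg_int : Integrable g ρ := int_bdd_prob ρ g hg_sm.aestronglyMeasurable _ hg_bdd
  have hg2_int : Integrable (fun θ => g θ ^ 2) ρ := by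
    refine int_bdd_prob ρ _ ((hg_sm.pow 2).aestronglyMeasurable) (|C| ^ 2) fun θ => ?_
    rw [abs_pow]
    exact pow_le_pow_left₀ (abs_nonneg _) (hg_bdd θ) 2
  have hv_int : Integrable v ρ := int_bdd_prob ρ v hv_sm.aestronglyMeasurable _ hv_bdd
  -- key pointwise facts about f on each fiber
  have hfθ_int : ∀ θ, Integrable (fun y => f (θ, y)) (L θ) := fun θ =>
    int_bdd_prob (L θ) _ (hf.comp measurable_prodMk_left).aestronglyMeasurable |C|
      (fun y => hC' _)
  have hfθ2_int : ∀ θ, Integrable (fun y => f (θ, y) ^ 2) (L θ) := by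
    intro θ
    refine int_bdd_prob (L θ) _
      (((hf.comp measurable_prodMk_left).pow_const 2).aestronglyMeasurable) (|C| ^ 2)
      fun y => ?_
    rw [abs_pow]
    exact pow_le_pow_left₀ (abs_nonneg _) (hC' _) 2
  set N := ∫ θ, g θ ∂ρ with hN
  constructor
  · -- posterior sensitivity
    have hval : ∀ ε : ℝ, penaltyWC ρ L f ε 0 = N + ε * varP ρ g := by
      intro ε
      have e1 : penaltyWC ρ L f ε 0
          = ∫ θ, (1 + ε * (g θ - ∫ θ', g θ' ∂ρ)) * g θ ∂ρ := by
        simp only [penaltyWC, zero_mul, add_zero, mul_zero, one_mul, ← hgdef]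
        rfl
      rw [e1, key_expand ρ g hg_int hg2_int ε]
      rfl
    have heq : ∀ᶠ ε in 𝓝[>] (0 : ℝ),
        (penaltyWC ρ L f ε 0 - ∫ θ, condMean L f θ ∂ρ) / ε = varP ρ (condMean L f) := by
      filter_upwards [self_mem_nhdsWithin] with ε hε
      have hε0 : ε ≠ 0 := ne_of_gt hε
      rw [hval ε]
      field_simp
      rw [hN, hgdef]; ring
    exact (tendsto_congr' heq).mpr tendsto_const_nhds
  · -- likelihood sensitivity
    have hval : ∀ δ : ℝ, penaltyWC ρ L f 0 δ = N + δ * ∫ θ, v θ ∂ρ := by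
      intro δ
      have e1 : penaltyWC ρ L f 0 δ
          = ∫ θ, (∫ y, (1 + δ * (f (θ, y) - g θ)) * f (θ, y) ∂(L θ)) ∂ρ := by
        simp only [penaltyWC, zero_mul, add_zero, one_mul, ← hgdef]
      have e2 : ∀ θ, (∫ y, (1 + δ * (f (θ, y) - g θ)) * f (θ, y) ∂(L θ))
          = g θ + δ * v θ := by
        intro θ
        have := key_expand (L θ) (fun y => f (θ, y)) (hfθ_int θ) (hfθ2_int θ) δ
        simpa only [hgdef, hvdef, condMean, _root_.condVar] using this
      rw [e1]
      calc ∫ θ, (∫ y, (1 + δ * (f (θ, y) - g θ)) * f (θ, y) ∂(L θ)) ∂ρ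
          = ∫ θ, (g θ + δ * v θ) ∂ρ := by
            exact integral_congr_ae (Filter.Eventually.of_forall e2)
        _ = N + δ * ∫ θ, v θ ∂ρ := by
            rw [integral_add hg_int (hv_int.const_mul δ), integral_const_mul, hN]
    have heq : ∀ᶠ δ in 𝓝[>] (0 : ℝ),
        (penaltyWC ρ L f 0 δ - ∫ θ, condMean L f θ ∂ρ) / δ = ∫ θ, condVar L f θ ∂ρ := by
      filter_upwards [self_mem_nhdsWithin] with δ hδ
      have hδ0 : δ ≠ 0 := ne_of_gt hδ
      rw [hval δ]
      field_simp
      rw [hN, hgdef, hvdef]; ring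
    exact (tendsto_congr' heq).mpr tendsto_const_nhds
end

section
/- Let P be a probability measure on a measurable space Ω, let f : Ω → ℝ be bounded and measurable, let α ∈ (0, 1) and ε ∈ (0, 1]. Then sup over measurable q : Ω → ℝ with ∫ q dP = 1 and 1 − ε ≤ q ≤ 1 + ε·α/(1−α) P-a.e. of ∫ q·f dP equals (1 − ε)·∫ f dP + ε·CVaR_α(f), where CVaR_α(f) := inf_{γ ∈ ℝ} ( γ + (1/(1−α))·∫ max(f − γ, 0) dP ). -/
open MeasureTheory

set_option maxHeartbeats 1000000 in
/-- CVaR duality for the indicator-type φ-divergence uncertainty set: the supremum of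
`∫ q f dP` over measurable densities `q` with `∫ q dP = 1` and
`1 − ε ≤ q ≤ 1 + ε·α/(1−α)` `P`-a.e. equals `(1−ε)·E_P[f] + ε·CVaR_α(f)`, where
`CVaR_α(f) = inf_γ { γ + (1/(1−α))·∫ max(f − γ, 0) dP }`. -/
theorem indicator_divergence_worst_case_eq_cvar
    {Ω : Type*} [MeasurableSpace Ω]
    (P : Measure Ω) [IsProbabilityMeasure P]
    (f : Ω → ℝ) (hf : Measurable f) (hf_bdd : ∃ C : ℝ, ∀ ω, |f ω| ≤ C)
    (α ε : ℝ) (hα : α ∈ Set.Ioo (0 : ℝ) 1) (hε : ε ∈ Set.Ioc (0 : ℝ) 1) :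
    sSup {x | ∃ q : Ω → ℝ, Measurable q ∧ (∫ ω, q ω ∂P = 1) ∧
        (∀ᵐ ω ∂P, 1 - ε ≤ q ω ∧ q ω ≤ 1 + ε * α / (1 - α)) ∧
        x = ∫ ω, q ω * f ω ∂P}
      = (1 - ε) * (∫ ω, f ω ∂P)
        + ε * ⨅ γ : ℝ, (γ + (1 / (1 - α)) * ∫ ω, max (f ω - γ) 0 ∂P) := by
  obtain ⟨hα0, hα1⟩ := hα
  obtain ⟨hε0, hε1⟩ := hε
  obtain ⟨C0, hC0⟩ := hf_bdd
  set C : ℝ := max C0 0 with hCdef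
  have hC : ∀ ω, |f ω| ≤ C := fun ω => le_max_of_le_left (hC0 ω)
  have hCnn : 0 ≤ C := le_max_right _ _
  set β : ℝ := 1 - α with hβdef
  have hβ0 : 0 < β := by rw [hβdef]; linarith
  have hβ1 : β ≤ 1 := by rw [hβdef]; linarith
  have hβinv : 1 ≤ 1 / β := one_le_one_div hβ0 hβ1
  -- integrability from bounds
  have intg : ∀ (g : Ω → ℝ) (K : ℝ), Measurable g → (∀ᵐ ω ∂P, |g ω| ≤ K) →
      Integrable g P := by
    intro g K hg hK
    refine Integrable.mono' (integrable_const K) hg.aestronglyMeasurable ?_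
    simpa [Real.norm_eq_abs] using hK
  have hfi : Integrable f P := intg f C hf (Filter.Eventually.of_forall hC)
  have hmax_meas : ∀ γ : ℝ, Measurable fun ω => max (f ω - γ) 0 :=
    fun γ => (hf.sub measurable_const).max measurable_const
  have hmax_int : ∀ γ : ℝ, Integrable (fun ω => max (f ω - γ) 0) P := by
    intro γ
    refine intg _ (C + |γ|) (hmax_meas γ) (Filter.Eventually.of_forall fun ω => ?_)
    rw [abs_of_nonneg (le_max_right _ _)]
    refine max_le (le_trans (le_trans (le_abs_self _) (abs_sub _ _)) ?_) (by positivity)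
    exact add_le_add (hC ω) le_rfl
  set μf : ℝ := ∫ ω, f ω ∂P with hμf
  set G : ℝ → ℝ := fun γ => γ + 1 / β * ∫ ω, max (f ω - γ) 0 ∂P with hGdef
  have hG_ge : ∀ γ, μf ≤ G γ := by
    intro γ
    have h1 : μf - γ ≤ ∫ ω, max (f ω - γ) 0 ∂P := by
      have : ∫ ω, (f ω - γ) ∂P ≤ ∫ ω, max (f ω - γ) 0 ∂P :=
        integral_mono (hfi.sub (integrable_const γ)) (hmax_int γ) fun ω => le_max_left _ _
      rwa [integral_sub hfi (integrable_const γ), integral_const, probReal_univ,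
        one_smul] at this
    have h2 : (0:ℝ) ≤ ∫ ω, max (f ω - γ) 0 ∂P :=
      integral_nonneg fun ω => le_max_right _ _
    have h3 : ∫ ω, max (f ω - γ) 0 ∂P ≤ (1/β) * ∫ ω, max (f ω - γ) 0 ∂P := by
      nlinarith
    show μf ≤ γ + 1 / β * ∫ ω, max (f ω - γ) 0 ∂P
    linarith
  have hGbdd : BddBelow (Set.range G) := ⟨μf, by rintro x ⟨γ, rfl⟩; exact hG_ge γ⟩
  set S : Set ℝ := {x | ∃ q : Ω → ℝ, Measurable q ∧ (∫ ω, q ω ∂P = 1) ∧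
      (∀ᵐ ω ∂P, 1 - ε ≤ q ω ∧ q ω ≤ 1 + ε * α / β) ∧
      x = ∫ ω, q ω * f ω ∂P} with hSdef
  have hεαβ : 0 ≤ ε * α / β := by positivity
  have hεβ : ε * α / β + ε = ε / β := by rw [hβdef]; field_simp; ring
  have hSne : μf ∈ S := by
    refine ⟨fun _ => 1, measurable_const, by simp, ?_, by simp [hμf]⟩
    refine Filter.Eventually.of_forall fun ω => ?_
    constructor
    · show 1 - ε ≤ 1; linarith
    · show (1:ℝ) ≤ 1 + ε * α / β; linarith
  -- upper bound
  have hub : ∀ x ∈ S, x ≤ (1 - ε) * μf + ε * ⨅ γ, G γ := by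
    rintro x ⟨q, hq, hq1, hqb, rfl⟩
    set K : ℝ := 1 + ε * α / β with hKdef
    have hqabs : ∀ᵐ ω ∂P, |q ω| ≤ K := by
      filter_upwards [hqb] with ω hω
      rw [abs_le]
      exact ⟨by rw [hKdef]; nlinarith [hω.1], hω.2⟩
    have hq_int : Integrable q P := intg q K hq hqabs
    have hqf_int : Integrable (fun ω => q ω * f ω) P := by
      refine intg _ (K * C) (hq.mul hf) ?_
      filter_upwards [hqabs] with ω hω
      rw [abs_mul]
      exact mul_le_mul hω (hC ω) (abs_nonneg _) (le_trans (abs_nonneg _) hω)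
    have key : ∀ γ : ℝ, ∫ ω, q ω * f ω ∂P ≤ (1 - ε) * μf + ε * G γ := by
      intro γ
      have hi1 : Integrable (fun ω => (1 - ε) * f ω) P := hfi.const_mul _
      have hi2 : Integrable (fun ω => (ε / β) * max (f ω - γ) 0) P :=
        (hmax_int γ).const_mul _
      have hi12 : Integrable (fun ω => (1 - ε) * f ω + (ε / β) * max (f ω - γ) 0) P := by
        exact hi1.add hi2
      have hi3 : Integrable (fun ω => (q ω - (1 - ε)) * γ) P := by
        exact (hq_int.sub (integrable_const _)).mul_const _
      have hrhs_int : Integrable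
          (fun ω => (1 - ε) * f ω + (ε / β) * max (f ω - γ) 0 + (q ω - (1 - ε)) * γ) P := by
        exact hi12.add hi3
      have hpt : ∀ᵐ ω ∂P, q ω * f ω ≤
          (1 - ε) * f ω + (ε / β) * max (f ω - γ) 0 + (q ω - (1 - ε)) * γ := by
        filter_upwards [hqb] with ω hω
        obtain ⟨h1, h2⟩ := hω
        have hs0 : 0 ≤ q ω - (1 - ε) := by linarith
        rw [hKdef] at h2
        have hs1 : q ω - (1 - ε) ≤ ε / β := by linarith [hεβ]
        rcases le_total (f ω - γ) 0 with hfg | hfg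
        · rw [max_eq_right hfg]
          nlinarith
        · rw [max_eq_left hfg]
          nlinarith
      have hint := integral_mono_ae hqf_int hrhs_int hpt
      have hexp : ∫ ω, ((1 - ε) * f ω + (ε / β) * max (f ω - γ) 0 + (q ω - (1 - ε)) * γ) ∂P
          = (1 - ε) * μf + (ε / β) * (∫ ω, max (f ω - γ) 0 ∂P) + ε * γ := by
        rw [integral_add hi12 hi3, integral_add hi1 hi2,
          integral_const_mul, integral_const_mul, integral_mul_const,
          integral_sub hq_int (integrable_const _), hq1, integral_const, probReal_univ,
          one_smul, hμf]
        ring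
      have hGγ : ε * G γ = ε * γ + (ε / β) * ∫ ω, max (f ω - γ) 0 ∂P := by
        show ε * (γ + 1 / β * ∫ ω, max (f ω - γ) 0 ∂P) = _
        ring
      rw [hexp] at hint
      rw [hGγ]
      linarith
    have hdiv : (∫ ω, q ω * f ω ∂P - (1 - ε) * μf) / ε ≤ ⨅ γ, G γ := by
      refine le_ciInf fun γ => ?_
      rw [div_le_iff₀ hε0]
      linarith [key γ]
    rw [div_le_iff₀ hε0] at hdiv
    linarith
  -- quantile construction for the lower bound
  set T : Set ℝ := {γ : ℝ | (P {ω | γ < f ω}).toReal ≤ β} with hTdef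
  have hTne : T.Nonempty := by
    refine ⟨C, ?_⟩
    have hempty : {ω | C < f ω} = ∅ := by
      ext ω
      simp only [Set.mem_setOf_eq, Set.mem_empty_iff_false, iff_false, not_lt]
      exact le_trans (le_abs_self _) (hC ω)
    show (P {ω | C < f ω}).toReal ≤ β
    rw [hempty]
    simp [hβ0.le]
  have hTbdd : BddBelow T := by
    refine ⟨-C, fun γ hγ => ?_⟩
    by_contra hlt
    push_neg at hlt
    have huniv : {ω | γ < f ω} = Set.univ := by
      ext ω
      simp only [Set.mem_setOf_eq, Set.mem_univ, iff_true]
      have := (abs_le.mp (hC ω)).1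
      linarith
    have hγ' : (P {ω | γ < f ω}).toReal ≤ β := hγ
    rw [huniv] at hγ'
    simp only [measure_univ, ENNReal.toReal_one] at hγ'
    rw [hβdef] at hγ'
    linarith
  have hTup : ∀ γ γ' : ℝ, γ ∈ T → γ ≤ γ' → γ' ∈ T := by
    intro γ γ' hγ hle
    have hγ' : (P {ω | γ < f ω}).toReal ≤ β := hγ
    show (P {ω | γ' < f ω}).toReal ≤ β
    refine le_trans ?_ hγ'
    refine ENNReal.toReal_mono (measure_ne_top P _) (measure_mono ?_)
    intro ω hω
    exact lt_of_le_of_lt hle hω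
  set γs : ℝ := sInf T with hγs
  -- Claim A : P(f > γs) ≤ β
  have claimA : (P {ω | γs < f ω}).toReal ≤ β := by
    set A : ℕ → Set Ω := fun n => {ω | γs + 1/(n+1) < f ω} with hAdef
    have hAmono : Monotone A := by
      intro n m hnm ω hω
      simp only [hAdef, Set.mem_setOf_eq] at *
      have : (1:ℝ)/(m+1) ≤ 1/(n+1) := by
        apply one_div_le_one_div_of_le (by positivity)
        exact_mod_cast add_le_add (Nat.cast_le.mpr hnm) le_rfl
      linarith
    have hAunion : ⋃ n, A n = {ω | γs < f ω} := by
      ext ω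
      simp only [Set.mem_iUnion, hAdef, Set.mem_setOf_eq]
      constructor
      · rintro ⟨n, hn⟩
        have : (0:ℝ) < 1/((n:ℝ)+1) := by positivity
        linarith
      · intro hω
        obtain ⟨n, hn⟩ := exists_nat_one_div_lt (show (0:ℝ) < f ω - γs by linarith)
        exact ⟨n, by linarith⟩
    have hAmem : ∀ n : ℕ, P (A n) ≤ ENNReal.ofReal β := by
      intro n
      have hlt : sInf T < γs + 1/((n:ℝ)+1) := by
        rw [← hγs]
        have : (0:ℝ) < 1/((n:ℝ)+1) := by positivity
        linarith
      obtain ⟨t, htT, htlt⟩ := exists_lt_of_csInf_lt hTne hlt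
      have hmemT : γs + 1/((n:ℝ)+1) ∈ T := hTup t _ htT htlt.le
      have hmemT' : (P {ω | γs + 1/((n:ℝ)+1) < f ω}).toReal ≤ β := hmemT
      exact (ENNReal.le_ofReal_iff_toReal_le (measure_ne_top P _) hβ0.le).mpr hmemT'
    have hle : P {ω | γs < f ω} ≤ ENNReal.ofReal β := by
      rw [← hAunion, hAmono.measure_iUnion]
      exact iSup_le hAmem
    exact ENNReal.toReal_le_of_le_ofReal hβ0.le hle
  -- Claim B : P(f ≥ γs) ≥ β
  have claimB : β ≤ (P {ω | γs ≤ f ω}).toReal := by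
    set B : ℕ → Set Ω := fun n => {ω | γs - 1/(n+1) < f ω} with hBdef
    have hBanti : Antitone B := by
      intro n m hnm ω hω
      simp only [hBdef, Set.mem_setOf_eq] at *
      have : (1:ℝ)/(m+1) ≤ 1/(n+1) := by
        apply one_div_le_one_div_of_le (by positivity)
        exact_mod_cast add_le_add (Nat.cast_le.mpr hnm) le_rfl
      linarith
    have hBinter : ⋂ n, B n = {ω | γs ≤ f ω} := by
      ext ω
      simp only [Set.mem_iInter, hBdef, Set.mem_setOf_eq]
      constructor
      · intro hω
        by_contra hlt
        push_neg at hlt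
        obtain ⟨n, hn⟩ := exists_nat_one_div_lt (show (0:ℝ) < γs - f ω by linarith)
        have := hω n
        linarith
      · intro hω n
        have : (0:ℝ) < 1/((n:ℝ)+1) := by positivity
        linarith
    have hBmem : ∀ n : ℕ, ENNReal.ofReal β ≤ P (B n) := by
      intro n
      have hnotT : γs - 1/((n:ℝ)+1) ∉ T := by
        intro hmem
        have hle := csInf_le hTbdd hmem
        rw [← hγs] at hle
        have hpos : (0:ℝ) < 1/((n:ℝ)+1) := by positivity
        linarith
      have hnotT' : ¬ (P {ω | γs - 1/((n:ℝ)+1) < f ω}).toReal ≤ β := hnotT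
      push_neg at hnotT'
      exact ENNReal.ofReal_le_of_le_toReal hnotT'.le
    have hBm : ∀ n, NullMeasurableSet (B n) P := fun n =>
      (measurableSet_lt measurable_const hf).nullMeasurableSet
    have hle : ENNReal.ofReal β ≤ P {ω | γs ≤ f ω} := by
      rw [← hBinter, hBanti.measure_iInter hBm ⟨0, measure_ne_top P _⟩]
      exact le_iInf hBmem
    rw [← ENNReal.ofReal_le_iff_le_toReal (measure_ne_top P _)]
    exact hle
  set p : ℝ := (P {ω | γs < f ω}).toReal with hpdef
  set m : ℝ := (P {ω | f ω = γs}).toReal with hmdef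
  have hp0 : 0 ≤ p := ENNReal.toReal_nonneg
  have hm0 : 0 ≤ m := ENNReal.toReal_nonneg
  have hA : MeasurableSet {ω | γs < f ω} := measurableSet_lt measurable_const hf
  have hB : MeasurableSet {ω | f ω = γs} := hf (measurableSet_singleton γs)
  have hABdisj : Disjoint {ω | γs < f ω} {ω | f ω = γs} := by
    rw [Set.disjoint_left]
    intro ω h1 h2
    simp only [Set.mem_setOf_eq] at *
    rw [h2] at h1
    exact lt_irrefl _ h1
  have hpm : p + m = (P {ω | γs ≤ f ω}).toReal := by
    have hun : {ω | γs < f ω} ∪ {ω | f ω = γs} = {ω | γs ≤ f ω} := by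
      ext ω
      simp only [Set.mem_union, Set.mem_setOf_eq]
      constructor
      · rintro (h | h)
        · exact h.le
        · exact h.ge
      · intro h
        rcases lt_or_eq_of_le h with h' | h'
        · exact Or.inl h'
        · exact Or.inr h'.symm
    rw [hpdef, hmdef, ← ENNReal.toReal_add (measure_ne_top P _) (measure_ne_top P _),
      ← measure_union hABdisj hB, hun]
  have hβpm : β ≤ p + m := by rw [hpm]; exact claimB
  set c : ℝ := if m = 0 then 0 else (β - p)/(β * m) with hcdef
  have hc0 : 0 ≤ c := by
    rw [hcdef]
    split_ifs with hm
    · exact le_rfl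
    · have hmpos : 0 < m := lt_of_le_of_ne hm0 (Ne.symm hm)
      exact div_nonneg (by linarith [claimA]) (by positivity)
  have hc_le : c ≤ 1 / β := by
    rw [hcdef]
    split_ifs with hm
    · positivity
    · have hmpos : 0 < m := lt_of_le_of_ne hm0 (Ne.symm hm)
      rw [div_le_div_iff₀ (by positivity) hβ0]
      nlinarith
  have hsum : p / β + c * m = 1 := by
    rw [hcdef]
    split_ifs with hm
    · have hpβ : p = β := by
        rw [hm] at hβpm
        linarith [claimA]
      rw [hpβ, hm]
      field_simp
      norm_num
    · have hmpos : 0 < m := lt_of_le_of_ne hm0 (Ne.symm hm)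
      field_simp
      ring
  -- the optimal density
  set r : Ω → ℝ := fun ω =>
      Set.indicator {ω | γs < f ω} (fun _ => 1/β) ω
      + Set.indicator {ω | f ω = γs} (fun _ => c) ω with hrdef
  have hr_meas : Measurable r :=
    (measurable_const.indicator hA).add (measurable_const.indicator hB)
  have hr0 : ∀ ω, 0 ≤ r ω := fun ω =>
    add_nonneg (Set.indicator_nonneg (fun _ _ => by positivity) ω)
      (Set.indicator_nonneg (fun _ _ => hc0) ω)
  have hr_val : ∀ ω, (γs < f ω → r ω = 1/β) ∧ (f ω = γs → r ω = c) ∧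
      (f ω < γs → r ω = 0) := by
    intro ω
    refine ⟨fun h => ?_, fun h => ?_, fun h => ?_⟩
    · have hωA : ω ∈ {ω | γs < f ω} := h
      have hωB : ω ∉ {ω | f ω = γs} := by
        simp only [Set.mem_setOf_eq]
        exact ne_of_gt h
      show Set.indicator _ _ ω + Set.indicator _ _ ω = 1/β
      rw [Set.indicator_of_mem hωA, Set.indicator_of_notMem hωB, add_zero]
    · have hωB : ω ∈ {ω | f ω = γs} := h
      have hωA : ω ∉ {ω | γs < f ω} := by
        simp only [Set.mem_setOf_eq]
        rw [h]
        exact lt_irrefl _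
      show Set.indicator _ _ ω + Set.indicator _ _ ω = c
      rw [Set.indicator_of_notMem hωA, Set.indicator_of_mem hωB, zero_add]
    · have hωA : ω ∉ {ω | γs < f ω} := by
        simp only [Set.mem_setOf_eq]
        exact not_lt.mpr h.le
      have hωB : ω ∉ {ω | f ω = γs} := by
        simp only [Set.mem_setOf_eq]
        exact ne_of_lt h
      show Set.indicator _ _ ω + Set.indicator _ _ ω = 0
      rw [Set.indicator_of_notMem hωA, Set.indicator_of_notMem hωB, add_zero]
  have hr_le : ∀ ω, r ω ≤ 1 / β := by
    intro ω
    rcases lt_trichotomy (f ω) γs with h | h | h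
    · rw [(hr_val ω).2.2 h]; positivity
    · rw [(hr_val ω).2.1 h]; exact hc_le
    · rw [(hr_val ω).1 h]
  have hi_indA : Integrable (fun ω => Set.indicator {ω | γs < f ω} (fun _ => 1/β) ω) P := by
    exact (integrable_const _).indicator hA
  have hi_indB : Integrable (fun ω => Set.indicator {ω | f ω = γs} (fun _ => c) ω) P := by
    exact (integrable_const _).indicator hB
  have hr_int : Integrable r P := by exact hi_indA.add hi_indB
  have hr1 : ∫ ω, r ω ∂P = 1 := by
    show ∫ ω, (Set.indicator {ω | γs < f ω} (fun _ => 1/β) ω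
      + Set.indicator {ω | f ω = γs} (fun _ => c) ω) ∂P = 1
    rw [integral_add hi_indA hi_indB, integral_indicator_const _ hA,
      integral_indicator_const _ hB, smul_eq_mul, smul_eq_mul, measureReal_def, measureReal_def, ← hpdef, ← hmdef]
    have hring : p * (1/β) + m * c = p / β + c * m := by ring
    rw [hring, hsum]
  have hrf_int : Integrable (fun ω => r ω * f ω) P := by
    refine intg _ ((1/β) * C) (hr_meas.mul hf) (Filter.Eventually.of_forall fun ω => ?_)
    rw [abs_mul, abs_of_nonneg (hr0 ω)]
    exact mul_le_mul (hr_le ω) (hC ω) (abs_nonneg _) (by positivity)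
  have hrf : ∫ ω, r ω * f ω ∂P = G γs := by
    have hpt : ∀ ω, r ω * f ω = (1/β) * max (f ω - γs) 0 + γs * r ω := by
      intro ω
      rcases lt_trichotomy (f ω) γs with h | h | h
      · rw [(hr_val ω).2.2 h, max_eq_right (by linarith)]
        ring
      · rw [(hr_val ω).2.1 h, h, max_eq_right (by linarith)]
        ring
      · rw [(hr_val ω).1 h, max_eq_left (by linarith)]
        ring
    have heq : ∫ ω, r ω * f ω ∂P = ∫ ω, ((1/β) * max (f ω - γs) 0 + γs * r ω) ∂P := by
      congr 1
      funext ω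
      exact hpt ω
    have hiA : Integrable (fun ω => (1/β) * max (f ω - γs) 0) P := (hmax_int γs).const_mul _
    have hiB : Integrable (fun ω => γs * r ω) P := hr_int.const_mul _
    rw [heq, integral_add hiA hiB, integral_const_mul, integral_const_mul, hr1]
    show 1 / β * ∫ ω, max (f ω - γs) 0 ∂P + γs * 1
      = γs + 1 / β * ∫ ω, max (f ω - γs) 0 ∂P
    ring
  -- the optimal q
  set qs : Ω → ℝ := fun ω => (1 - ε) + ε * r ω with hqsdef
  have hqs_meas : Measurable qs := measurable_const.add (hr_meas.const_mul ε)
  have hiε : Integrable (fun ω => ε * r ω) P := hr_int.const_mul _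
  have hqs1 : ∫ ω, qs ω ∂P = 1 := by
    show ∫ ω, ((1 - ε) + ε * r ω) ∂P = 1
    rw [integral_add (integrable_const _) hiε, integral_const_mul, hr1,
      integral_const, probReal_univ, one_smul]
    ring
  have hβform : 1 + ε * α / β = (1 - ε) + ε * (1/β) := by
    rw [hβdef]
    field_simp
    ring
  have hqs_bdd : ∀ᵐ ω ∂P, 1 - ε ≤ qs ω ∧ qs ω ≤ 1 + ε * α / β := by
    refine Filter.Eventually.of_forall fun ω => ⟨?_, ?_⟩
    · show 1 - ε ≤ (1 - ε) + ε * r ω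
      nlinarith [hr0 ω]
    · show (1 - ε) + ε * r ω ≤ 1 + ε * α / β
      rw [hβform]
      nlinarith [hr_le ω]
  have hiεf : Integrable (fun ω => ε * (r ω * f ω)) P := hrf_int.const_mul _
  have hi1f : Integrable (fun ω => (1 - ε) * f ω) P := hfi.const_mul _
  have hqsf : ∫ ω, qs ω * f ω ∂P = (1 - ε) * μf + ε * G γs := by
    have hpt : ∀ ω, qs ω * f ω = (1 - ε) * f ω + ε * (r ω * f ω) := by
      intro ω
      show ((1 - ε) + ε * r ω) * f ω = _
      ring
    have heq : ∫ ω, qs ω * f ω ∂P = ∫ ω, ((1 - ε) * f ω + ε * (r ω * f ω)) ∂P := by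
      congr 1
      funext ω
      exact hpt ω
    rw [heq, integral_add hi1f hiεf, integral_const_mul, integral_const_mul, hrf, hμf]
  have hmemS : (1 - ε) * μf + ε * G γs ∈ S :=
    ⟨qs, hqs_meas, hqs1, hqs_bdd, hqsf.symm⟩
  -- conclude
  have hBddAbove : BddAbove S := ⟨(1 - ε) * μf + ε * ⨅ γ, G γ, fun x hx => hub x hx⟩
  have hlow : (1 - ε) * μf + ε * ⨅ γ, G γ ≤ sSup S := by
    have h1 : (1 - ε) * μf + ε * ⨅ γ, G γ ≤ (1 - ε) * μf + ε * G γs := by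
      have := ciInf_le hGbdd γs
      nlinarith
    exact le_trans h1 (le_csSup hBddAbove hmemS)
  exact le_antisymm (csSup_le ⟨μf, hSne⟩ hub) hlow
end
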